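/- Fix L > 0 and let x ∈ S^{n-1} satisfy LCD_{L,n}(x) ≤ 2D for some D > 0, and suppose there exists p ∈ ℤⁿ with ‖θx - p‖₂ ≤ L√(log₊(θ/L)) where θ = LCD_{L,n}(x) ≥ D. Then ‖x - p/‖p‖₂‖₂ ≤ (4L/D)·√(log₊(2D/L)). -/

import Mathlib

open MeasureTheory ProbabilityTheory Real
open scoped ENNReal

noncomputable section

namespace Paper

def toE {m : ℕ} (v : Fin m → ℝ) : EuclideanSpace ℝ (Fin m) := WithLp.toLp 2 v

def mulE {m n : ℕ} (M : Matrix (Fin m) (Fin n) ℝ) (x : EuclideanSpace ℝ (Fin n)) :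
    EuclideanSpace ℝ (Fin m) := toE (M.mulVec (fun i => x i))

def opNorm {n : ℕ} (M : Matrix (Fin n) (Fin n) ℝ) : ℝ :=
  sSup {r : ℝ | ∃ x : EuclideanSpace ℝ (Fin n), ‖x‖ = 1 ∧ r = ‖mulE M x‖}

def sMin {n : ℕ} (M : Matrix (Fin n) (Fin n) ℝ) : ℝ :=
  sInf {r : ℝ | ∃ x : EuclideanSpace ℝ (Fin n), ‖x‖ = 1 ∧ r = ‖mulE M x‖}

def suppCard {n : ℕ} (v : EuclideanSpace ℝ (Fin n)) : ℕ := Nat.card {i : Fin n // v i ≠ 0}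

def Comp {n : ℕ} (δ ρ : ℝ) : Set (EuclideanSpace ℝ (Fin n)) :=
  {x | ‖x‖ = 1 ∧ ∃ z : EuclideanSpace ℝ (Fin n), (suppCard z : ℝ) ≤ δ * n ∧ ‖x - z‖ ≤ ρ}

def Incomp {n : ℕ} (δ ρ : ℝ) : Set (EuclideanSpace ℝ (Fin n)) :=
  {x | ‖x‖ = 1 ∧ x ∉ Comp δ ρ}

def logPlus (x : ℝ) : ℝ := max (Real.log x) 0

def LCD {m : ℕ} (L : ℝ) (v : EuclideanSpace ℝ (Fin m)) : ℝ :=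
  sInf {θ : ℝ | 0 < θ ∧ ∃ p : Fin m → ℤ,
    ‖θ • v - toE (fun i => (p i : ℝ))‖ < L * Real.sqrt (logPlus (‖θ • v‖ / L))}

def nzd {m : ℕ} (w : EuclideanSpace ℝ (Fin m)) : EuclideanSpace ℝ (Fin m) := ‖w‖⁻¹ • w

def trunc {n : ℕ} (v : EuclideanSpace ℝ (Fin n)) (σ : Equiv.Perm (Fin n)) (k : ℕ)
    (hk : k ≤ n) : EuclideanSpace ℝ (Fin k) := WithLp.toLp 2 (fun i => v (σ (Fin.castLE hk i)))

def IsOrdering {n : ℕ} (v : EuclideanSpace ℝ (Fin n)) (σ : Equiv.Perm (Fin n)) : Prop :=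
  ∀ i j : Fin n, i ≤ j → |v (σ i)| ≤ |v (σ j)|

def TV {n k : ℕ} (v : EuclideanSpace ℝ (Fin n)) (I : Finset (Fin n)) (h : I.card = k) :
    EuclideanSpace ℝ (Fin k) := WithLp.toLp 2 (fun i => v (I.orderIsoOfFin h i))

def colE {n : ℕ} (A : Matrix (Fin n) (Fin n) ℝ) (l : Fin n) : EuclideanSpace ℝ (Fin n) :=
  WithLp.toLp 2 (fun i => A i l)

def GK {n : ℕ} (K : ℝ) (M : Matrix (Fin n) (Fin n) ℝ) : Set (EuclideanSpace ℝ (Fin n)) :=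
  {v | ‖v‖ ≤ 1 ∧ ‖mulE M v‖ ≤ 2 * K * Real.sqrt n}

def EI {n : ℕ} (I : Finset (Fin n)) : Set (EuclideanSpace ℝ (Fin n)) :=
  {v | ∀ i, i ∉ I → v i = 0}

def IsCenteredSubgUnit (ν : Measure ℝ) : Prop :=
  IsProbabilityMeasure ν ∧ (∫ x, x ∂ν) = 0 ∧ (∫ x, x ^ 2 ∂ν) = 1 ∧
    ∃ B > 0, ∀ t > 0, ν {x : ℝ | t < |x|} ≤ ENNReal.ofReal (2 * Real.exp (-t ^ 2 / B ^ 2))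

def IsIIDEntries {n : ℕ} {Ω : Type} [MeasureSpace Ω] (ν : Measure ℝ)
    (R : Ω → Matrix (Fin n) (Fin n) ℝ) : Prop :=
  (∀ i j, Measurable fun ω => R ω i j) ∧
  (∀ i j, Measure.map (fun ω => R ω i j) ℙ = ν) ∧
  iIndepFun (fun ij : Fin n × Fin n => fun ω => R ω ij.1 ij.2) ℙ


theorem approx_by_normalized_integer_point {n : ℕ} (L D : ℝ) (hL : 0 < L) (hD : 0 < D)
    (x : EuclideanSpace ℝ (Fin n)) (hx : ‖x‖ = 1)
    (hub : Paper.LCD L x ≤ 2 * D) (hlb : D ≤ Paper.LCD L x)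
    (p : Fin n → ℤ)
    (hp : ‖(Paper.LCD L x) • x - Paper.toE (fun i => (p i : ℝ))‖ ≤
        L * Real.sqrt (Paper.logPlus (Paper.LCD L x / L))) :
    ‖x - ‖Paper.toE (fun i => (p i : ℝ))‖⁻¹ • Paper.toE (fun i => (p i : ℝ))‖ ≤
      4 * L / D * Real.sqrt (Paper.logPlus (2 * D / L)) := by
  set θ := Paper.LCD L x with hθdef
  have hθ : 0 < θ := lt_of_lt_of_le hD hlb
  set q : EuclideanSpace ℝ (Fin n) := Paper.toE (fun i => (p i : ℝ)) with hqdef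
  have hsq : 0 ≤ Real.sqrt (Paper.logPlus (θ / L)) := Real.sqrt_nonneg _
  -- q ≠ 0
  have hq : q ≠ 0 := by
    intro h
    rw [h, sub_zero] at hp
    have hnorm : ‖θ • x‖ = θ := by
      rw [norm_smul, hx, mul_one, Real.norm_eq_abs, abs_of_pos hθ]
    rw [hnorm] at hp
    set t := θ / L with ht
    have ht0 : 0 < t := div_pos hθ hL
    have hle : t ≤ Real.sqrt (Paper.logPlus t) := by
      rw [ht, div_le_iff₀ hL, mul_comm]
      exact hp
    have hlt : Real.sqrt (Paper.logPlus t) < t := by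
      rw [Real.sqrt_lt' ht0]
      have h1 : Real.log t ≤ t - 1 := Real.log_le_sub_one_of_pos ht0
      have h2 : t - 1 < t ^ 2 := by nlinarith
      have h3 : (0:ℝ) < t ^ 2 := by positivity
      unfold Paper.logPlus
      exact max_lt (lt_of_le_of_lt h1 h2) h3
    exact absurd (hle.trans_lt hlt) (lt_irrefl t)
  have hqn : 0 < ‖q‖ := norm_pos_iff.mpr hq
  have h1 : ‖x - θ⁻¹ • q‖ = θ⁻¹ * ‖θ • x - q‖ := by
    rw [← norm_smul_of_nonneg (inv_nonneg.mpr hθ.le), smul_sub, smul_smul,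
      inv_mul_cancel₀ hθ.ne', one_smul]
  have h2 : ‖θ⁻¹ • q - ‖q‖⁻¹ • q‖ ≤ ‖x - θ⁻¹ • q‖ := by
    have e1 : ‖θ⁻¹ • q - ‖q‖⁻¹ • q‖ = |‖θ⁻¹ • q‖ - ‖x‖| := by
      rw [← sub_smul, norm_smul, Real.norm_eq_abs, norm_smul, Real.norm_eq_abs,
        abs_of_pos (inv_pos.mpr hθ), hx]
      have e2 : (θ⁻¹ - ‖q‖⁻¹) * ‖q‖ = θ⁻¹ * ‖q‖ - 1 := by field_simp
      rw [← e2, abs_mul, abs_of_pos hqn]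
    rw [e1, norm_sub_rev]
    exact abs_norm_sub_norm_le _ _
  have key : ‖x - ‖q‖⁻¹ • q‖ ≤ 2 * θ⁻¹ * (L * Real.sqrt (Paper.logPlus (θ / L))) := by
    calc ‖x - ‖q‖⁻¹ • q‖ ≤ ‖x - θ⁻¹ • q‖ + ‖θ⁻¹ • q - ‖q‖⁻¹ • q‖ := by
          simpa using norm_sub_le_norm_sub_add_norm_sub x (θ⁻¹ • q) (‖q‖⁻¹ • q)
      _ ≤ 2 * ‖x - θ⁻¹ • q‖ := by linarith
      _ = 2 * θ⁻¹ * ‖θ • x - q‖ := by rw [h1]; ring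
      _ ≤ 2 * θ⁻¹ * (L * Real.sqrt (Paper.logPlus (θ / L))) := by
          have : (0:ℝ) ≤ 2 * θ⁻¹ := by positivity
          exact mul_le_mul_of_nonneg_left hp this
  refine key.trans ?_
  have hmono : Real.sqrt (Paper.logPlus (θ / L)) ≤ Real.sqrt (Paper.logPlus (2 * D / L)) := by
    apply Real.sqrt_le_sqrt
    unfold Paper.logPlus
    exact max_le_max (Real.log_le_log (div_pos hθ hL) ((div_le_div_iff_of_pos_right hL).mpr hub)) le_rfl
  have hθinv : θ⁻¹ ≤ D⁻¹ := inv_anti₀ hD hlb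
  have hS : 0 ≤ Real.sqrt (Paper.logPlus (2 * D / L)) := Real.sqrt_nonneg _
  calc 2 * θ⁻¹ * (L * Real.sqrt (Paper.logPlus (θ / L)))
      ≤ 2 * D⁻¹ * (L * Real.sqrt (Paper.logPlus (2 * D / L))) := by
        apply mul_le_mul
        · linarith
        · exact mul_le_mul_of_nonneg_left hmono hL.le
        · positivity
        · positivity
    _ = 2 * L / D * Real.sqrt (Paper.logPlus (2 * D / L)) := by
        field_simp
    _ ≤ 4 * L / D * Real.sqrt (Paper.logPlus (2 * D / L)) := by
        apply mul_le_mul_of_nonneg_right ?_ hS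
        gcongr
        linarith

end Paper
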